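/- (Correlation Superposition Theorem, trace form.) Let X_sC ∈ ℝ^{N×p}, X_rC ∈ ℝ^{N×q}, Y_C ∈ ℝ^{N×m} be given, and let X_C = (X_sC, X_rC) ∈ ℝ^{N×(p+q)} be their horizontal concatenation. Suppose: (i) Y_C = V·B for some V ∈ ℝ^{N×m} and invertible m×m matrix B; (ii) X_sC = W_s·A_s for some W_s ∈ ℝ^{N×p} and invertible p×p matrix A_s; (iii) X_rC = W_s·C + W_r·D for some W_r ∈ ℝ^{N×q}, C ∈ ℝ^{p×q}, and invertible q×q matrix D; (iv) W_sᵀ·W_r = 0; and (v) the matrices X_Cᵀ·X_C, Y_Cᵀ·Y_C, W_sᵀ·W_s, W_rᵀ·W_r, and Vᵀ·V are invertible. Then tr((X_CᵀX_C)⁻¹ X_CᵀY_C (Y_CᵀY_C)⁻¹ Y_CᵀX_C) = tr((W_sᵀW_s)⁻¹ W_sᵀV (VᵀV)⁻¹ VᵀW_s) + tr((W_rᵀW_r)⁻¹ W_rᵀV (VᵀV)⁻¹ VᵀW_r). -/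

import Mathlib

open Matrix

lemma proj_transform {o n : Type*} [Fintype o] [Fintype n] [DecidableEq n]
    (X : Matrix o n ℝ) (T : Matrix n n ℝ) (hT : IsUnit T) (hX : IsUnit (Xᵀ * X)) :
    (X * T) * (((X * T)ᵀ * (X * T))⁻¹) * (X * T)ᵀ = X * (Xᵀ * X)⁻¹ * Xᵀ := by
  have hTd : IsUnit T.det := (Matrix.isUnit_iff_isUnit_det T).mp hT
  have hTtd : IsUnit Tᵀ.det := by rwa [Matrix.det_transpose]
  have hXd : IsUnit (Xᵀ * X).det := (Matrix.isUnit_iff_isUnit_det _).mp hX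
  have h1 : (X * T)ᵀ * (X * T) = Tᵀ * (Xᵀ * X) * T := by
    simp [Matrix.transpose_mul, Matrix.mul_assoc]
  rw [h1, Matrix.mul_inv_rev, Matrix.mul_inv_rev, Matrix.transpose_mul]
  simp only [Matrix.mul_assoc]
  rw [Matrix.mul_nonsing_inv_cancel_left _ _ hTd,
    Matrix.nonsing_inv_mul_cancel_left _ _ hTtd]

/-- Correlation Superposition Theorem (trace form). -/
theorem correlation_superposition {N p q m : ℕ}
    (Xs : Matrix (Fin N) (Fin p) ℝ) (Xr : Matrix (Fin N) (Fin q) ℝ)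
    (Y : Matrix (Fin N) (Fin m) ℝ)
    (V : Matrix (Fin N) (Fin m) ℝ) (B : Matrix (Fin m) (Fin m) ℝ)
    (Ws : Matrix (Fin N) (Fin p) ℝ) (As : Matrix (Fin p) (Fin p) ℝ)
    (Wr : Matrix (Fin N) (Fin q) ℝ) (C : Matrix (Fin p) (Fin q) ℝ)
    (D : Matrix (Fin q) (Fin q) ℝ)
    (hB : IsUnit B) (hAs : IsUnit As) (hD : IsUnit D)
    (hY : Y = V * B) (hXs : Xs = Ws * As) (hXr : Xr = Ws * C + Wr * D)
    (horth : Wsᵀ * Wr = 0)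
    (hXX : IsUnit ((fromCols Xs Xr)ᵀ * fromCols Xs Xr))
    (hYY : IsUnit (Yᵀ * Y))
    (hWs : IsUnit (Wsᵀ * Ws)) (hWr : IsUnit (Wrᵀ * Wr)) (hV : IsUnit (Vᵀ * V)) :
    trace (((fromCols Xs Xr)ᵀ * fromCols Xs Xr)⁻¹ * (fromCols Xs Xr)ᵀ * Y
        * (Yᵀ * Y)⁻¹ * Yᵀ * fromCols Xs Xr)
      = trace ((Wsᵀ * Ws)⁻¹ * Wsᵀ * V * (Vᵀ * V)⁻¹ * Vᵀ * Ws)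
        + trace ((Wrᵀ * Wr)⁻¹ * Wrᵀ * V * (Vᵀ * V)⁻¹ * Vᵀ * Wr) := by
  set X : Matrix (Fin N) (Fin p ⊕ Fin q) ℝ := fromCols Xs Xr with hXdef
  set W : Matrix (Fin N) (Fin p ⊕ Fin q) ℝ := fromCols Ws Wr with hWdef
  set T : Matrix (Fin p ⊕ Fin q) (Fin p ⊕ Fin q) ℝ := fromBlocks As C 0 D with hTdef
  have horth' : Wrᵀ * Ws = 0 := by
    have := congrArg Matrix.transpose horth
    simpa [Matrix.transpose_mul] using this
  have hWT : X = W * T := by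
    rw [hXdef, hWdef, hTdef, fromCols_mul_fromBlocks]
    simp [hXs, hXr]
  have hT : IsUnit T := by
    rw [Matrix.isUnit_iff_isUnit_det, hTdef, Matrix.det_fromBlocks_zero₂₁]
    exact ((Matrix.isUnit_iff_isUnit_det As).mp hAs).mul
      ((Matrix.isUnit_iff_isUnit_det D).mp hD)
  have hWWeq : Wᵀ * W = fromBlocks (Wsᵀ * Ws) 0 0 (Wrᵀ * Wr) := by
    rw [hWdef, transpose_fromCols, fromRows_mul_fromCols, horth, horth']
  have hWW : IsUnit (Wᵀ * W) := by
    rw [Matrix.isUnit_iff_isUnit_det, hWWeq, Matrix.det_fromBlocks_zero₂₁]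
    exact ((Matrix.isUnit_iff_isUnit_det _).mp hWs).mul
      ((Matrix.isUnit_iff_isUnit_det _).mp hWr)
  have hWWinv : (Wᵀ * W)⁻¹ = fromBlocks (Wsᵀ * Ws)⁻¹ 0 0 (Wrᵀ * Wr)⁻¹ := by
    rw [hWWeq]
    apply Matrix.inv_eq_right_inv
    rw [fromBlocks_multiply]
    simp [Matrix.mul_nonsing_inv _ ((Matrix.isUnit_iff_isUnit_det _).mp hWs),
      Matrix.mul_nonsing_inv _ ((Matrix.isUnit_iff_isUnit_det _).mp hWr),
      ← fromBlocks_one]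
  have key : X * (Xᵀ * X)⁻¹ * Xᵀ
      = Ws * (Wsᵀ * Ws)⁻¹ * Wsᵀ + Wr * (Wrᵀ * Wr)⁻¹ * Wrᵀ := by
    rw [hWT, proj_transform W T hT hWW, hWWinv, hWdef, transpose_fromCols,
      fromCols_mul_fromBlocks, fromCols_mul_fromRows]
    simp [Matrix.mul_assoc]
  have keyY : Y * (Yᵀ * Y)⁻¹ * Yᵀ = V * (Vᵀ * V)⁻¹ * Vᵀ := by
    have hVu : IsUnit (Vᵀ * V) := hV
    rw [hY]
    exact proj_transform V B hB hVu
  have main : (Xᵀ * X)⁻¹ * Xᵀ * Y * (Yᵀ * Y)⁻¹ * Yᵀ * X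
      = (Xᵀ * X)⁻¹ * Xᵀ * (Y * (Yᵀ * Y)⁻¹ * Yᵀ) * X := by
    simp only [Matrix.mul_assoc]
  rw [main, keyY, Matrix.trace_mul_comm]
  have : X * ((Xᵀ * X)⁻¹ * Xᵀ * (V * (Vᵀ * V)⁻¹ * Vᵀ))
      = (X * (Xᵀ * X)⁻¹ * Xᵀ) * (V * (Vᵀ * V)⁻¹ * Vᵀ) := by
    simp only [Matrix.mul_assoc]
  rw [this, key, add_mul, Matrix.trace_add]
  congr 1
  · have e1 : Ws * (Wsᵀ * Ws)⁻¹ * Wsᵀ * (V * (Vᵀ * V)⁻¹ * Vᵀ)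
        = Ws * ((Wsᵀ * Ws)⁻¹ * Wsᵀ * V * (Vᵀ * V)⁻¹ * Vᵀ) := by
      simp only [Matrix.mul_assoc]
    rw [e1, Matrix.trace_mul_comm]
  · have e2 : Wr * (Wrᵀ * Wr)⁻¹ * Wrᵀ * (V * (Vᵀ * V)⁻¹ * Vᵀ)
        = Wr * ((Wrᵀ * Wr)⁻¹ * Wrᵀ * V * (Vᵀ * V)⁻¹ * Vᵀ) := by
      simp only [Matrix.mul_assoc]
    rw [e2, Matrix.trace_mul_comm]
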